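/- arXiv:2605.13679 — 6 statements merged into one kernel-verified Lean document; each statement's English description precedes it below -/
import Mathlib

section
/- Let 0<α<1, k>0, φ>0, N>0, γ>0. The function U(n,e) = ln((1 - n k φ N^γ) k - n e) + ln n + α ln e, defined on the set of (n,e) with n>0, e>0 and (1 - n k φ N^γ) k - n e > 0, attains its unique critical point at n* = (1-α)/(2 k φ N^γ) and e* = (α/(1-α)) k² φ N^γ. -/
open Real

/-- Household optimization under perfect substitutability: the utility
`U(n,e) = log((1 - n k φ N^γ) k - n e) + log n + α log e` has its unique
critical point (both partial derivatives vanish) at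
`n* = (1-α)/(2 k φ N^γ)`, `e* = (α/(1-α)) k² φ N^γ`. -/
theorem stmt_0 (α k φ N γ : ℝ) (hα : 0 < α) (hα1 : α < 1)
    (hk : 0 < k) (hφ : 0 < φ) (hN : 0 < N) (hγ : 0 < γ) :
    ∀ n e : ℝ, 0 < n → 0 < e → 0 < (1 - n * k * φ * N ^ γ) * k - n * e →
      ((deriv (fun x : ℝ =>
          Real.log ((1 - x * k * φ * N ^ γ) * k - x * e) + Real.log x
            + α * Real.log e) n = 0 ∧
        deriv (fun y : ℝ =>
          Real.log ((1 - n * k * φ * N ^ γ) * k - n * y) + Real.log n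
            + α * Real.log y) e = 0)
       ↔ (n = (1 - α) / (2 * k * φ * N ^ γ)
            ∧ e = (α / (1 - α)) * k ^ 2 * φ * N ^ γ)) := by
  intro n e hn he hC
  obtain ⟨P, hPdef⟩ : ∃ P : ℝ, P = N ^ γ := ⟨_, rfl⟩
  have hP : 0 < P := by rw [hPdef]; positivity
  rw [← hPdef] at hC ⊢
  have hDpos : 0 < (1 - n * k * φ * P) * k - n * e := hC
  have hDne : (1 - n * k * φ * P) * k - n * e ≠ 0 := hDpos.ne'
  have h1α : (0:ℝ) < 1 - α := by linarith
  -- derivative in n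
  have h1 : HasDerivAt (fun x : ℝ => (1 - x * k * φ * P) * k - x * e)
      (-(k * φ * P * k + e)) n := by
    have h : HasDerivAt (fun x : ℝ => (1 - x * (k * φ * P)) * k - x * e)
        ((0 - 1 * (k * φ * P)) * k - 1 * e) n := by
      have := ((((hasDerivAt_id n).mul_const (k * φ * P)).const_sub 1).mul_const k).sub
        ((hasDerivAt_id n).mul_const e)
      simp only [id] at this
      exact this.congr_deriv (by ring)
    have heq : (fun x : ℝ => (1 - x * k * φ * P) * k - x * e)
        = (fun x : ℝ => (1 - x * (k * φ * P)) * k - x * e) := by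
      funext x; ring
    rw [heq]
    convert h using 1; ring
  have hD1 : HasDerivAt (fun x : ℝ =>
      Real.log ((1 - x * k * φ * P) * k - x * e) + Real.log x
        + α * Real.log e)
      (-(k * φ * P * k + e) / ((1 - n * k * φ * P) * k - n * e) + 1 / n) n := by
    have hlog := h1.log hDne
    have h2 : HasDerivAt (fun x : ℝ => Real.log x) (1 / n) n := by
      simpa using Real.hasDerivAt_log hn.ne'
    exact (hlog.add h2).add_const _
  -- derivative in e
  have h3 : HasDerivAt (fun y : ℝ => (1 - n * k * φ * P) * k - n * y)
      (-n) e := by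
    have h : HasDerivAt (fun y : ℝ => (1 - n * k * φ * P) * k - n * y)
        (0 - n * 1) e := (hasDerivAt_const e _).sub ((hasDerivAt_id e).const_mul n)
    convert h using 1; ring
  have hD2 : HasDerivAt (fun y : ℝ =>
      Real.log ((1 - n * k * φ * P) * k - n * y) + Real.log n
        + α * Real.log y)
      (-n / ((1 - n * k * φ * P) * k - n * e) + α * (1 / e)) e := by
    have hlog := h3.log hDne
    have h4 : HasDerivAt (fun y : ℝ => α * Real.log y) (α * (1 / e)) e := by
      simpa using (Real.hasDerivAt_log he.ne').const_mul α
    exact (hlog.add_const _).add h4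
  rw [hD1.deriv, hD2.deriv]
  constructor
  · rintro ⟨e1, e2⟩
    have E1 : (1 - n * k * φ * P) * k - n * e = n * (k * φ * P * k + e) := by
      rw [neg_div] at e1
      have h : (k * φ * P * k + e) / ((1 - n * k * φ * P) * k - n * e) = 1 / n := by
        linarith [e1]
      rw [div_eq_div_iff hDne hn.ne'] at h
      linarith [h]
    have E2 : α * ((1 - n * k * φ * P) * k - n * e) = n * e := by
      rw [neg_div] at e2
      have h : n / ((1 - n * k * φ * P) * k - n * e) = α * (1 / e) := by
        linarith [e2]
      rw [mul_one_div, div_eq_div_iff hDne he.ne'] at h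
      linarith [h]
    have hev : e = α / (1 - α) * k ^ 2 * φ * P := by
      have key : n * ((1 - α) * e) = n * (α * k ^ 2 * φ * P) := by
        linear_combination α * E1 - E2
      have key2 : (1 - α) * e = α * k ^ 2 * φ * P :=
        mul_left_cancel₀ hn.ne' key
      field_simp
      linear_combination key2
    have hnv : n = (1 - α) / (2 * k * φ * P) := by
      rw [eq_div_iff (by positivity)]
      have key : k = 2 * n * (k * φ * P * k + e) := by linear_combination E1
      rw [hev] at key
      field_simp at key
      nlinarith [key, hk.ne', mul_pos hk hP]
    exact ⟨hnv, hev⟩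
  · rintro ⟨hnv, hev⟩
    subst hnv hev
    have hDval : (1 - (1 - α) / (2 * k * φ * P) * k * φ * P) * k
        - (1 - α) / (2 * k * φ * P) * (α / (1 - α) * k ^ 2 * φ * P) = k / 2 := by
      field_simp
      ring
    rw [hDval]
    constructor
    · rw [div_add_div _ _ (by positivity : (k:ℝ)/2 ≠ 0)
        (by positivity : (1 - α) / (2 * k * φ * P) ≠ 0), div_eq_zero_iff]
      left
      field_simp
      ring
    · rw [neg_div, neg_add_eq_zero, eq_comm]
      rw [div_div_eq_mul_div]
      have hne1 : α / (1 - α) * k ^ 2 * φ * P ≠ 0 := by positivity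
      rw [one_div, eq_comm, div_eq_iff (by positivity : (k:ℝ) ≠ 0),
        eq_comm, mul_right_comm, mul_inv_eq_iff_eq_mul₀ hne1]
      field_simp
end

section
/- Let 0<α<1, k>0, φ>0, N>0, γ>0. The function U(n,e) = ln((1 - 2 n k φ N^γ) k - n e) + ln n + α ln e, defined on the set of (n,e) with n>0, e>0 and (1 - 2 n k φ N^γ) k - n e > 0, attains its unique critical point at n* = (1-α)/(4 k φ N^γ) and e* = 2(α/(1-α)) k² φ N^γ. -/
open Real

/-- Household optimization under perfect complementarity: the utility
`U(n,e) = log((1 - 2 n k φ N^γ) k - n e) + log n + α log e` has its unique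
critical point at `n* = (1-α)/(4 k φ N^γ)`, `e* = 2(α/(1-α)) k² φ N^γ`. -/
theorem stmt_1 (α k φ N γ : ℝ) (hα : 0 < α) (hα1 : α < 1)
    (hk : 0 < k) (hφ : 0 < φ) (hN : 0 < N) (hγ : 0 < γ) :
    ∀ n e : ℝ, 0 < n → 0 < e → 0 < (1 - 2 * n * k * φ * N ^ γ) * k - n * e →
      ((deriv (fun x : ℝ =>
          Real.log ((1 - 2 * x * k * φ * N ^ γ) * k - x * e) + Real.log x
            + α * Real.log e) n = 0 ∧
        deriv (fun y : ℝ =>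
          Real.log ((1 - 2 * n * k * φ * N ^ γ) * k - n * y) + Real.log n
            + α * Real.log y) e = 0)
       ↔ (n = (1 - α) / (4 * k * φ * N ^ γ)
            ∧ e = 2 * (α / (1 - α)) * k ^ 2 * φ * N ^ γ)) := by
  intro n e hn he hc
  have hNγ : (0:ℝ) < N ^ γ := by positivity
  have h1α : (0:ℝ) < 1 - α := by linarith
  -- derivative in n
  have hu : HasDerivAt (fun x : ℝ => (1 - 2 * x * k * φ * N ^ γ) * k - x * e)
      (-(2 * k * φ * N ^ γ * k + e)) n := by
    have h : HasDerivAt (fun x : ℝ => k - (2 * k * φ * N ^ γ * k + e) * x)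
        (-(2 * k * φ * N ^ γ * k + e)) n := by
      simpa using ((hasDerivAt_id n).const_mul (2 * k * φ * N ^ γ * k + e)).const_sub k
    have heq : (fun x : ℝ => (1 - 2 * x * k * φ * N ^ γ) * k - x * e)
        = fun x : ℝ => k - (2 * k * φ * N ^ γ * k + e) * x := by
      funext x; ring
    rw [heq]; exact h
  have hd1 : deriv (fun x : ℝ =>
      Real.log ((1 - 2 * x * k * φ * N ^ γ) * k - x * e) + Real.log x
        + α * Real.log e) n
      = -(2 * k * φ * N ^ γ * k + e) / ((1 - 2 * n * k * φ * N ^ γ) * k - n * e)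
          + n⁻¹ :=
    (((hu.log hc.ne').add (Real.hasDerivAt_log hn.ne')).add_const (α * Real.log e)).deriv
  -- derivative in e
  have hv : HasDerivAt (fun y : ℝ => (1 - 2 * n * k * φ * N ^ γ) * k - n * y) (-n) e := by
    simpa using ((hasDerivAt_id e).const_mul n).const_sub ((1 - 2 * n * k * φ * N ^ γ) * k)
  have hd2 : deriv (fun y : ℝ =>
      Real.log ((1 - 2 * n * k * φ * N ^ γ) * k - n * y) + Real.log n
        + α * Real.log y) e
      = -n / ((1 - 2 * n * k * φ * N ^ γ) * k - n * e) + α * e⁻¹ :=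
    (((hv.log hc.ne').add_const (Real.log n)).add
      ((Real.hasDerivAt_log he.ne').const_mul α)).deriv
  rw [hd1, hd2]
  constructor
  · rintro ⟨h1, h2⟩
    have E1 : (1 - 2 * n * k * φ * N ^ γ) * k - n * e
        = n * (2 * k * φ * N ^ γ * k + e) := by
      have key : (-(2 * k * φ * N ^ γ * k + e) / ((1 - 2 * n * k * φ * N ^ γ) * k - n * e)
          + n⁻¹) * (((1 - 2 * n * k * φ * N ^ γ) * k - n * e) * n)
          = -(2 * k * φ * N ^ γ * k + e) * n + ((1 - 2 * n * k * φ * N ^ γ) * k - n * e) := by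
        rw [add_mul, div_mul_eq_mul_div, mul_comm ((1 - 2 * n * k * φ * N ^ γ) * k - n * e) n,
          ← mul_assoc, mul_div_assoc, div_self hc.ne', inv_mul_cancel_left₀ hn.ne']
        ring
      rw [h1, zero_mul] at key
      linarith
    have E2 : α * ((1 - 2 * n * k * φ * N ^ γ) * k - n * e) = n * e := by
      have key : (-n / ((1 - 2 * n * k * φ * N ^ γ) * k - n * e) + α * e⁻¹)
          * (((1 - 2 * n * k * φ * N ^ γ) * k - n * e) * e)
          = -n * e + α * ((1 - 2 * n * k * φ * N ^ γ) * k - n * e) := by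
        rw [add_mul, div_mul_eq_mul_div, mul_comm ((1 - 2 * n * k * φ * N ^ γ) * k - n * e) e,
          ← mul_assoc, mul_div_assoc, div_self hc.ne', mul_assoc α, inv_mul_cancel_left₀ he.ne']
        ring
      rw [h2, zero_mul] at key
      linarith
    have h3 : n * (e * (1 - α) - 2 * α * k * φ * N ^ γ * k) = 0 := by
      linear_combination α * E1 - E2
    have h4 : e * (1 - α) = 2 * α * k * φ * N ^ γ * k := by
      rcases mul_eq_zero.1 h3 with h | h
      · exact absurd h hn.ne'
      · linarith
    have h5 : k * (n * (4 * k * φ * N ^ γ) - (1 - α)) = 0 := by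
      linear_combination -(1 - α) * E1 - 2 * n * h4
    have h6 : n * (4 * k * φ * N ^ γ) - (1 - α) = 0 := by
      rcases mul_eq_zero.1 h5 with h | h
      · exact absurd h hk.ne'
      · exact h
    constructor
    · rw [eq_div_iff (by positivity)]
      linarith
    · field_simp
      linear_combination h4
  · rintro ⟨hn', he'⟩
    have hce : (1 - 2 * n * k * φ * N ^ γ) * k - n * e = k / 2 := by
      rw [hn', he']
      field_simp
      ring
    constructor
    · rw [hce, hn', he']
      field_simp
      ring
    · rw [hce, hn', he']
      field_simp
      ring
end

section
/- Let A>0, φ>0, 0<α, 0<β, α+β<1, 0<γ<1. The system k = A[(α/(1-α)) k² φ N^γ]^α k^β, N = ((1-α)/(2φk)) N^{1-γ} has a unique solution with k>0, N>0, given by k̄_S = (A^{1/α} α/2)^{α/(1-β-α)} and N̄_S = A^{-1/((1-β-α)γ)} ((1-α)/(2φ))^{(1-β-2α)/((1-β-α)γ)} [(α/(1-α))φ]^{-α/((1-β-α)γ)}. -/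
open Real

private lemma eq_iff_log_eq {x y : ℝ} (hx : 0 < x) (hy : 0 < y) :
    x = y ↔ Real.log x = Real.log y :=
  ⟨fun h => by rw [h], fun h =>
    Real.log_injOn_pos (Set.mem_Ioi.2 hx) (Set.mem_Ioi.2 hy) h⟩

/-- Steady state of the perfect-substitutes system: the system
`k = A ((α/(1-α)) k² φ N^γ)^α k^β`, `N = ((1-α)/(2φk)) N^{1-γ}` has the unique
positive solution `(k̄_S, N̄_S)` given in Proposition 1. -/
theorem stmt_3 (A φ α β γ : ℝ) (hA : 0 < A) (hφ : 0 < φ)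
    (hα : 0 < α) (hβ : 0 < β) (hαβ : α + β < 1) (hγ0 : 0 < γ) (hγ1 : γ < 1) :
    ∀ k N : ℝ, 0 < k → 0 < N →
      ((k = A * ((α / (1 - α)) * k ^ 2 * φ * N ^ γ) ^ α * k ^ β ∧
        N = ((1 - α) / (2 * φ * k)) * N ^ (1 - γ))
       ↔ (k = (A ^ (1 / α) * α / 2) ^ (α / (1 - β - α)) ∧
          N = A ^ (-1 / ((1 - β - α) * γ))
              * ((1 - α) / (2 * φ)) ^ ((1 - β - 2 * α) / ((1 - β - α) * γ))
              * ((α / (1 - α)) * φ) ^ (-α / ((1 - β - α) * γ)))) := by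
  intro k N hk hN
  have hα1 : α < 1 := by linarith
  have h1α : (0:ℝ) < 1 - α := by linarith
  have hD : (0:ℝ) < 1 - β - α := by linarith
  have hDne : (1 - β - α) ≠ 0 := ne_of_gt hD
  have hγne : γ ≠ 0 := ne_of_gt hγ0
  have hαne : α ≠ 0 := ne_of_gt hα
  have h1αne : (1 - α) ≠ 0 := ne_of_gt h1α
  have hAne : A ≠ 0 := ne_of_gt hA
  have hφne : φ ≠ 0 := ne_of_gt hφ
  have hkne : k ≠ 0 := ne_of_gt hk
  have hNne : N ≠ 0 := ne_of_gt hN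
  have hP : 0 < (α / (1 - α)) * k ^ 2 * φ * N ^ γ := by positivity
  have hR1 : 0 < A * ((α / (1 - α)) * k ^ 2 * φ * N ^ γ) ^ α * k ^ β := by positivity
  have hR2 : 0 < ((1 - α) / (2 * φ * k)) * N ^ (1 - γ) := by positivity
  have hB : 0 < A ^ (1 / α) * α / 2 := by positivity
  have hkb : 0 < (A ^ (1 / α) * α / 2) ^ (α / (1 - β - α)) := Real.rpow_pos_of_pos hB _
  have hNb : 0 < A ^ (-1 / ((1 - β - α) * γ))
      * ((1 - α) / (2 * φ)) ^ ((1 - β - 2 * α) / ((1 - β - α) * γ))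
      * ((α / (1 - α)) * φ) ^ (-α / ((1 - β - α) * γ)) := by positivity
  rw [eq_iff_log_eq hk hR1, eq_iff_log_eq hN hR2, eq_iff_log_eq hk hkb,
    eq_iff_log_eq hN hNb]
  have hE1 : Real.log (A * ((α / (1 - α)) * k ^ 2 * φ * N ^ γ) ^ α * k ^ β)
      = Real.log A + α * (Real.log α - Real.log (1 - α) + 2 * Real.log k
          + Real.log φ + γ * Real.log N) + β * Real.log k := by
    rw [Real.log_mul (by positivity : (0:ℝ) < A * ((α / (1 - α)) * k ^ 2 * φ * N ^ γ) ^ α).ne' (Real.rpow_pos_of_pos hk β).ne',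
      Real.log_mul hAne (Real.rpow_pos_of_pos hP α).ne',
      Real.log_rpow hP, Real.log_rpow hk,
      Real.log_mul (by positivity : (0:ℝ) < (α / (1 - α)) * k ^ 2 * φ).ne'
        (Real.rpow_pos_of_pos hN γ).ne',
      Real.log_mul (by positivity : (0:ℝ) < (α / (1 - α)) * k ^ 2).ne' hφne,
      Real.log_mul (by positivity : (0:ℝ) < (α / (1 - α))).ne' (pow_ne_zero 2 hkne),
      Real.log_div hαne h1αne, Real.log_pow, Real.log_rpow hN]
    push_cast; ring
  have hE2 : Real.log (((1 - α) / (2 * φ * k)) * N ^ (1 - γ))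
      = Real.log (1 - α) - (Real.log 2 + Real.log φ + Real.log k)
        + (1 - γ) * Real.log N := by
    rw [Real.log_mul (by positivity : (0:ℝ) < (1 - α) / (2 * φ * k)).ne'
        (Real.rpow_pos_of_pos hN _).ne',
      Real.log_div h1αne (by positivity : (0:ℝ) < 2 * φ * k).ne',
      Real.log_mul (by positivity : (0:ℝ) < 2 * φ).ne' hkne,
      Real.log_mul (two_ne_zero) hφne, Real.log_rpow hN]
  have hE1' : Real.log ((A ^ (1 / α) * α / 2) ^ (α / (1 - β - α)))
      = (α / (1 - β - α)) * ((1 / α) * Real.log A + Real.log α - Real.log 2) := by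
    rw [Real.log_rpow hB, Real.log_div (by positivity : (0:ℝ) < A ^ (1/α) * α).ne'
        two_ne_zero,
      Real.log_mul (Real.rpow_pos_of_pos hA _).ne' hαne, Real.log_rpow hA]
  have hE2' : Real.log (A ^ (-1 / ((1 - β - α) * γ))
      * ((1 - α) / (2 * φ)) ^ ((1 - β - 2 * α) / ((1 - β - α) * γ))
      * ((α / (1 - α)) * φ) ^ (-α / ((1 - β - α) * γ)))
      = (-1 / ((1 - β - α) * γ)) * Real.log A
        + ((1 - β - 2 * α) / ((1 - β - α) * γ))
            * (Real.log (1 - α) - (Real.log 2 + Real.log φ))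
        + (-α / ((1 - β - α) * γ))
            * (Real.log α - Real.log (1 - α) + Real.log φ) := by
    rw [Real.log_mul (by positivity : (0:ℝ) < A ^ (-1 / ((1 - β - α) * γ)) * ((1 - α) / (2 * φ)) ^ ((1 - β - 2 * α) / ((1 - β - α) * γ))).ne'
        (Real.rpow_pos_of_pos (by positivity : (0:ℝ) < (α / (1 - α)) * φ) _).ne',
      Real.log_mul (Real.rpow_pos_of_pos hA _).ne'
        (Real.rpow_pos_of_pos (by positivity : (0:ℝ) < (1 - α) / (2 * φ)) _).ne',
      Real.log_rpow hA,
      Real.log_rpow (by positivity : (0:ℝ) < (1 - α) / (2 * φ)),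
      Real.log_rpow (by positivity : (0:ℝ) < (α / (1 - α)) * φ),
      Real.log_div h1αne (by positivity : (0:ℝ) < 2 * φ).ne',
      Real.log_mul two_ne_zero hφne,
      Real.log_mul (by positivity : (0:ℝ) < α / (1 - α)).ne' hφne,
      Real.log_div hαne h1αne]
  rw [hE1, hE2, hE1', hE2']
  set a := Real.log A
  set f := Real.log φ
  set p := Real.log α
  set q := Real.log (1 - α)
  set t := Real.log 2
  set x := Real.log k
  set y := Real.log N
  constructor
  · rintro ⟨h1, h2⟩
    have hx : (1 - β - α) * x = a + α * (p - t) := by linear_combination h1 + α * h2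
    have hxval : x = (a + α * (p - t)) / (1 - β - α) := by
      rw [eq_div_iff hDne]; linear_combination hx
    have hyval : y = (q - t - f - x) / γ := by
      rw [eq_div_iff hγne]; linear_combination h2
    constructor
    · rw [hxval]; field_simp; ring
    · rw [hyval, hxval]; field_simp; ring
  · rintro ⟨g1, g2⟩
    constructor
    · rw [g1, g2]; field_simp; ring
    · rw [g1, g2]; field_simp; ring
end

section
/- Let A>0, φ>0, 0<α, 0<β, α+β<1, 0<γ<1. Let (k̄_S, N̄_S) be the unique positive steady state of the perfect-substitutes system and (k̄_C, N̄_C) the unique positive steady state of the perfect-complements system (where the latter solves k = A[2(α/(1-α)) k² φ N^γ]^α k^β and N = ((1-α)/(4φk)) N^{1-γ}). Then k̄_C = k̄_S and N̄_C = 2^{-1/γ} N̄_S; in particular 0 < N̄_C < N̄_S. -/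
open Real

lemma rpow_inv_self_aux {x p : ℝ} (hx : 0 < x) (hp : p ≠ 0) :
    (x ^ p) ^ (1 / p) = x := by
  rw [← Real.rpow_mul (le_of_lt hx), mul_one_div, div_self hp, Real.rpow_one]

/-- Comparison of steady states: the perfect-complements steady state has the
same human capital as the perfect-substitutes steady state and population
smaller by the factor `Ω = 2^{-1/γ}`. -/
theorem stmt_4 (A φ α β γ : ℝ) (hA : 0 < A) (hφ : 0 < φ)
    (hα : 0 < α) (hβ : 0 < β) (hαβ : α + β < 1) (hγ0 : 0 < γ) (hγ1 : γ < 1)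
    (kS NS kC NC : ℝ) (hkS : 0 < kS) (hNS : 0 < NS) (hkC : 0 < kC) (hNC : 0 < NC)
    (hS1 : kS = A * ((α / (1 - α)) * kS ^ 2 * φ * NS ^ γ) ^ α * kS ^ β)
    (hS2 : NS = ((1 - α) / (2 * φ * kS)) * NS ^ (1 - γ))
    (hC1 : kC = A * (2 * (α / (1 - α)) * kC ^ 2 * φ * NC ^ γ) ^ α * kC ^ β)
    (hC2 : NC = ((1 - α) / (4 * φ * kC)) * NC ^ (1 - γ)) :
    kC = kS ∧ NC = (2 : ℝ) ^ (-1 / γ) * NS ∧ 0 < NC ∧ NC < NS := by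
  have hα1 : α < 1 := by linarith
  have h1α : (0:ℝ) < 1 - α := by linarith
  have hγne : γ ≠ 0 := ne_of_gt hγ0
  -- NS^γ = (1-α)/(2φkS)
  have hNSγ : NS ^ γ = (1 - α) / (2 * φ * kS) := by
    have hu : (0:ℝ) < NS ^ (1 - γ) := rpow_pos_of_pos hNS _
    have key : NS ^ γ * NS ^ (1 - γ) = NS := by
      rw [← Real.rpow_add hNS]; norm_num
    have : NS ^ γ * NS ^ (1 - γ) = ((1 - α) / (2 * φ * kS)) * NS ^ (1 - γ) := by
      rw [key]; exact hS2
    exact mul_right_cancel₀ (ne_of_gt hu) this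
  have hNCγ : NC ^ γ = (1 - α) / (4 * φ * kC) := by
    have hu : (0:ℝ) < NC ^ (1 - γ) := rpow_pos_of_pos hNC _
    have key : NC ^ γ * NC ^ (1 - γ) = NC := by
      rw [← Real.rpow_add hNC]; norm_num
    have : NC ^ γ * NC ^ (1 - γ) = ((1 - α) / (4 * φ * kC)) * NC ^ (1 - γ) := by
      rw [key]; exact hC2
    exact mul_right_cancel₀ (ne_of_gt hu) this
  -- simplify inner terms
  have hinS : (α / (1 - α)) * kS ^ 2 * φ * NS ^ γ = α / 2 * kS := by
    rw [hNSγ]; field_simp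
  have hinC : 2 * (α / (1 - α)) * kC ^ 2 * φ * NC ^ γ = α / 2 * kC := by
    rw [hNCγ]; field_simp; ring
  have hα2 : (0:ℝ) < α / 2 := by positivity
  have hp : (0:ℝ) < 1 - (α + β) := by linarith
  have hkpow : ∀ k : ℝ, 0 < k → k = A * (α / 2 * k) ^ α * k ^ β →
      k ^ (1 - (α + β)) = A * (α / 2) ^ α := by
    intro k hk hk1
    have h2 : (α / 2 * k) ^ α = (α / 2) ^ α * k ^ α :=
      Real.mul_rpow (le_of_lt hα2) (le_of_lt hk)
    have h3 : k = A * (α / 2) ^ α * k ^ (α + β) := by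
      rw [Real.rpow_add hk]
      calc k = A * (α / 2 * k) ^ α * k ^ β := hk1
        _ = A * (α / 2) ^ α * (k ^ α * k ^ β) := by rw [h2]; ring
        _ = _ := by ring
    have h4 : k ^ (1 - (α + β)) = k * k ^ (-(α + β)) := by
      rw [show (1:ℝ) - (α + β) = 1 + -(α + β) by ring, Real.rpow_add hk,
        Real.rpow_one]
    rw [h4]
    nth_rewrite 1 [h3]
    rw [mul_assoc, ← Real.rpow_add hk,
      show α + β + -(α + β) = (0:ℝ) by ring, Real.rpow_zero, mul_one]
  have hS1' : kS ^ (1 - (α + β)) = A * (α / 2) ^ α := by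
    apply hkpow kS hkS; rw [← hinS]; exact hS1
  have hC1' : kC ^ (1 - (α + β)) = A * (α / 2) ^ α := by
    apply hkpow kC hkC; rw [← hinC]; exact hC1
  have hkeq : kC = kS := by
    have h := hC1'.trans hS1'.symm
    have := congrArg (· ^ (1 / (1 - (α + β)))) h
    simp only [rpow_inv_self_aux hkC (ne_of_gt hp),
      rpow_inv_self_aux hkS (ne_of_gt hp)] at this
    exact this
  -- population relation
  have hNCγ' : NC ^ γ = (1 / 2 : ℝ) * NS ^ γ := by
    rw [hNCγ, hNSγ, hkeq]
    field_simp
    ring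
  have hNeq : NC = (2 : ℝ) ^ (-1 / γ) * NS := by
    have h2 : ((2:ℝ) ^ (-1/γ)) ^ γ = (1/2 : ℝ) := by
      rw [← Real.rpow_mul (by norm_num : (0:ℝ) ≤ 2),
        show -1 / γ * γ = (-1 : ℝ) from div_mul_cancel₀ _ hγne,
        Real.rpow_neg_one]
      norm_num
    have hpos2 : (0:ℝ) < (2 : ℝ) ^ (-1 / γ) * NS := by positivity
    have hboth : NC ^ γ = ((2 : ℝ) ^ (-1 / γ) * NS) ^ γ := by
      rw [Real.mul_rpow (by positivity) (le_of_lt hNS), h2, hNCγ']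
    have := congrArg (· ^ (1 / γ)) hboth
    simp only [rpow_inv_self_aux hNC hγne, rpow_inv_self_aux hpos2 hγne] at this
    exact this
  refine ⟨hkeq, hNeq, hNC, ?_⟩
  have hlt1 : (2 : ℝ) ^ (-1 / γ) < 1 :=
    Real.rpow_lt_one_of_one_lt_of_neg (by norm_num) (by
      rw [neg_div]; exact neg_neg_of_pos (by positivity))
  calc NC = (2 : ℝ) ^ (-1 / γ) * NS := hNeq
    _ < 1 * NS := mul_lt_mul_of_pos_right hlt1 hNS
    _ = NS := one_mul NS
end

section
/- Let 0<α, 0<β, α+β<1, A>0, b>0. There exists b̄ > 0 such that the equation A^{1/(1-β-α)} (α/(1+α))^{α/(1-β-α)} z^{(1-β)/(1-β-α)} (1+α-2z) = (1+α)b has exactly two solutions in (0,(1+α)/2) when 0<b<b̄, exactly one when b=b̄, and none when b>b̄; b̄ = H(z*)/(1+α) where z* is the unique maximizer of the left-hand side H on (0,(1+α)/2). -/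
open Real

/-- Threshold subsidy (Proposition 5): there exists `b̄ > 0` such that the
steady-state equation `H(z) = (1+α)b` has exactly two solutions in
`(0,(1+α)/2)` for `0 < b < b̄`, exactly one for `b = b̄`, and none for
`b > b̄`; moreover `b̄ = H(z*)/(1+α)` for the unique maximizer `z*` of `H`. -/
theorem stmt_10 (α β A : ℝ) (hα : 0 < α) (hβ : 0 < β) (hαβ : α + β < 1)
    (hA : 0 < A) :
    let H := fun z : ℝ =>
      A ^ (1 / (1 - β - α)) * (α / (1 + α)) ^ (α / (1 - β - α))
        * z ^ ((1 - β) / (1 - β - α)) * (1 + α - 2 * z)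
    let I := Set.Ioo (0 : ℝ) ((1 + α) / 2)
    ∃ bbar : ℝ, 0 < bbar ∧
      (∃ zstar ∈ I, (∀ z ∈ I, z ≠ zstar → H z < H zstar) ∧
        bbar = H zstar / (1 + α)) ∧
      (∀ b : ℝ, 0 < b → b < bbar →
        ∃ z₁ z₂, z₁ ≠ z₂ ∧ z₁ ∈ I ∧ z₂ ∈ I ∧
          H z₁ = (1 + α) * b ∧ H z₂ = (1 + α) * b ∧
          ∀ z ∈ I, H z = (1 + α) * b → z = z₁ ∨ z = z₂) ∧
      (∃! z : ℝ, z ∈ I ∧ H z = (1 + α) * bbar) ∧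
      (∀ b : ℝ, bbar < b → ∀ z ∈ I, H z ≠ (1 + α) * b) := by
  intro H I
  set d : ℝ := 1 - β - α with hd
  have hd0 : 0 < d := by simp only [hd]; linarith
  set p : ℝ := (1 - β) / d with hp
  have hp1 : 1 < p := by
    rw [hp, lt_div_iff₀ hd0]; simp only [hd]; linarith
  have hp0 : 0 < p := lt_trans one_pos hp1
  have h1α : (0:ℝ) < 1 + α := by linarith
  set C : ℝ := A ^ (1 / d) * (α / (1 + α)) ^ (α / d) with hC
  have hC0 : 0 < C :=
    mul_pos (Real.rpow_pos_of_pos hA _)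
      (Real.rpow_pos_of_pos (div_pos hα h1α) _)
  set g : ℝ → ℝ := fun z => C * (z ^ p * (1 + α - 2 * z)) with hg
  have hHeq : ∀ z, H z = g z := by
    intro z; simp only [H, g, hC, hp, hd]; ring
  simp only [hHeq]
  -- derivative of g
  have hderiv : ∀ z : ℝ, HasDerivAt g
      (C * (p * z ^ (p - 1) * (1 + α - 2 * z) + z ^ p * (-2))) z := by
    intro z
    have h1 : HasDerivAt (fun z : ℝ => z ^ p) (p * z ^ (p - 1)) z :=
      Real.hasDerivAt_rpow_const (Or.inr hp1.le)
    have h2 : HasDerivAt (fun z : ℝ => 1 + α - 2 * z) (-2) z := by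
      simpa using ((hasDerivAt_id z).const_mul (2:ℝ)).const_sub (1 + α)
    exact (h1.mul h2).const_mul C
  have hdiff : Differentiable ℝ g := fun z => (hderiv z).differentiableAt
  have hcont : Continuous g := hdiff.continuous
  have hderiv' : ∀ z : ℝ, 0 < z →
      deriv g z = C * z ^ (p - 1) * (p * (1 + α) - 2 * (p + 1) * z) := by
    intro z hz
    rw [(hderiv z).deriv]
    have hzp : z ^ p = z ^ (p - 1) * z := by
      rw [← Real.rpow_add_one hz.ne' (p - 1)]; norm_num
    rw [hzp]; ring
  set zst : ℝ := p * (1 + α) / (2 * (p + 1)) with hzst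
  have hden : (0:ℝ) < 2 * (p + 1) := by linarith
  have hzst0 : 0 < zst := div_pos (mul_pos hp0 h1α) hden
  have hzstR : zst < (1 + α) / 2 := by
    rw [hzst, div_lt_div_iff₀ hden (by norm_num : (0:ℝ) < 2)]
    nlinarith
  -- monotonicity
  have hmono : StrictMonoOn g (Set.Icc 0 zst) := by
    apply strictMonoOn_of_deriv_pos (convex_Icc _ _) hcont.continuousOn
    intro z hz
    rw [interior_Icc] at hz
    rw [hderiv' z hz.1]
    have h1 : 0 < z ^ (p - 1) := Real.rpow_pos_of_pos hz.1 _
    have h2 : 0 < p * (1 + α) - 2 * (p + 1) * z := by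
      have h := hz.2
      rw [hzst, lt_div_iff₀ hden] at h
      linarith
    exact mul_pos (mul_pos hC0 h1) h2
  have hanti : StrictAntiOn g (Set.Icc zst ((1 + α) / 2)) := by
    apply strictAntiOn_of_deriv_neg (convex_Icc _ _) hcont.continuousOn
    intro z hz
    rw [interior_Icc] at hz
    have hz0 : 0 < z := lt_trans hzst0 hz.1
    rw [hderiv' z hz0]
    have h1 : 0 < z ^ (p - 1) := Real.rpow_pos_of_pos hz0 _
    have h2 : p * (1 + α) - 2 * (p + 1) * z < 0 := by
      have h := hz.1
      rw [hzst, div_lt_iff₀ hden] at h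
      linarith
    exact mul_neg_of_pos_of_neg (mul_pos hC0 h1) h2
  -- values
  have hg0 : g 0 = 0 := by
    simp [hg, Real.zero_rpow hp0.ne']
  have hgR : g ((1 + α) / 2) = 0 := by
    have : 1 + α - 2 * ((1 + α) / 2) = 0 := by ring
    simp [hg, this]
  have hgzst : 0 < g zst :=
    mul_pos hC0 (mul_pos (Real.rpow_pos_of_pos hzst0 _) (by linarith))
  have hzstI : zst ∈ I := ⟨hzst0, hzstR⟩
  have hmax : ∀ z ∈ I, z ≠ zst → g z < g zst := by
    intro z hz hne
    rcases lt_or_gt_of_ne hne with h | h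
    · exact hmono ⟨hz.1.le, h.le⟩ ⟨hzst0.le, le_refl _⟩ h
    · exact hanti ⟨le_refl _, hzstR.le⟩ ⟨h.le, hz.2.le⟩ h
  refine ⟨g zst / (1 + α), div_pos hgzst h1α, ⟨zst, hzstI, hmax, rfl⟩, ?_, ?_, ?_⟩
  · -- two solutions for 0 < b < bbar
    intro b hb0 hbb
    have hy0 : 0 < (1 + α) * b := mul_pos h1α hb0
    have hyM : (1 + α) * b < g zst := by
      rw [lt_div_iff₀ h1α] at hbb; linarith [hbb]
    obtain ⟨z₁, hz₁mem, hz₁⟩ :=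
      intermediate_value_Icc hzst0.le hcont.continuousOn
        (by rw [hg0]; exact ⟨hy0.le, hyM.le⟩)
    obtain ⟨z₂, hz₂mem, hz₂⟩ :=
      intermediate_value_Icc' hzstR.le hcont.continuousOn
        (by rw [hgR]; exact ⟨hy0.le, hyM.le⟩)
    have hz₁0 : 0 < z₁ := by
      rcases lt_or_eq_of_le hz₁mem.1 with h | h
      · exact h
      · exfalso; rw [← h, hg0] at hz₁; linarith
    have hz₁lt : z₁ < zst := by
      rcases lt_or_eq_of_le hz₁mem.2 with h | h
      · exact h
      · exfalso; rw [h] at hz₁; linarith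
    have hz₂gt : zst < z₂ := by
      rcases lt_or_eq_of_le hz₂mem.1 with h | h
      · exact h
      · exfalso; rw [← h] at hz₂; linarith
    have hz₂lt : z₂ < (1 + α) / 2 := by
      rcases lt_or_eq_of_le hz₂mem.2 with h | h
      · exact h
      · exfalso; rw [h, hgR] at hz₂; linarith
    refine ⟨z₁, z₂, by linarith, ⟨hz₁0, lt_trans hz₁lt hzstR⟩,
      ⟨lt_trans hzst0 hz₂gt, hz₂lt⟩, hz₁, hz₂, ?_⟩
    intro z hz hgz
    by_cases hle : z ≤ zst
    · left
      exact hmono.injOn ⟨hz.1.le, hle⟩ hz₁mem (by rw [hgz, hz₁])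
    · right
      push_neg at hle
      exact hanti.injOn ⟨hle.le, hz.2.le⟩ hz₂mem (by rw [hgz, hz₂])
  · -- unique solution at bbar
    have hbb : (1 + α) * (g zst / (1 + α)) = g zst := by
      field_simp
    refine ⟨zst, ⟨hzstI, by rw [hbb]⟩, ?_⟩
    intro z ⟨hzI, hgz⟩
    by_contra hne
    have := hmax z hzI hne
    rw [hgz, hbb] at this
    exact lt_irrefl _ this
  · -- no solutions above bbar
    intro b hb z hz hgz
    have h1 : g z ≤ g zst := by
      by_cases h : z = zst
      · rw [h]
      · exact (hmax z hz h).le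
    have h2 : g zst < (1 + α) * b := by
      have := (div_lt_iff₀ h1α).mp hb
      linarith
    linarith [hgz ▸ h1]
end

section
/- Let 0<α<1, k>0, X>0, b>0, τ ∈ [0,1) with (1-τ)X > (1+α)b/2 (precisely, 2(1-τ)X > (1+α)b). Under perfect substitutability, the first-order conditions -n/c + α/e = 0 and [-(1-τ)X + b - e]/c + 1/n = 0 with c = (1-τ)(k - Xn) + bn - ne are solved by e* = (α/(1-α))[(1-τ)X - b] and n* = (1-α)[(1-τ)k + b n*] / (2(1-τ)X - (1+α)b). -/
open Real

/-- Household problem under perfect substitutability with exogenous tax `τ`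
and linear subsidy `b n`: the first-order conditions `-n/c + α/e = 0` and
`(-(1-τ)X + b - e)/c + 1/n = 0`, with `c = (1-τ)(k - Xn) + bn - ne`, are
solved by `e* = (α/(1-α))[(1-τ)X - b]` and the implicit fertility rule
`n* = (1-α)[(1-τ)k + b n*]/(2(1-τ)X - (1+α)b)`. -/
theorem stmt_13 (α k X b τ : ℝ) (hα : 0 < α) (hα1 : α < 1) (hk : 0 < k)
    (hX : 0 < X) (hb : 0 < b) (hτ0 : 0 ≤ τ) (hτ1 : τ < 1)
    (hfeas : (1 + α) * b < 2 * (1 - τ) * X) :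
    ∀ n e : ℝ, 0 < n → 0 < e →
      0 < (1 - τ) * (k - X * n) + b * n - n * e →
      e = (α / (1 - α)) * ((1 - τ) * X - b) →
      n = (1 - α) * ((1 - τ) * k + b * n) / (2 * (1 - τ) * X - (1 + α) * b) →
      (-(n / ((1 - τ) * (k - X * n) + b * n - n * e)) + α / e = 0 ∧
       (-((1 - τ) * X) + b - e) / ((1 - τ) * (k - X * n) + b * n - n * e)
         + 1 / n = 0) := by
  intro n e hn he hc hee hnn
  have h1α : (0:ℝ) < 1 - α := by linarith
  have hden : (0:ℝ) < 2 * (1 - τ) * X - (1 + α) * b := by linarith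
  have he' : e * (1 - α) = α * ((1 - τ) * X - b) := by
    rw [div_mul_eq_mul_div, eq_div_iff h1α.ne'] at hee
    linarith
  have hn' : n * (2 * (1 - τ) * X - (1 + α) * b)
      = (1 - α) * ((1 - τ) * k + b * n) := by
    rw [eq_div_iff hden.ne'] at hnn
    linarith
  set c := (1 - τ) * (k - X * n) + b * n - n * e with hcdef
  have hD : 2 * n * ((1 - τ) * X - b) = (1 - α) * ((1 - τ) * k) := by
    nlinarith [hn']
  have key1 : α * c = n * e := by
    apply mul_right_cancel₀ h1α.ne'
    rw [hcdef]; linear_combination (-(1+α)*n)*he' - α*hD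
  have key2 : n * ((1 - τ) * X - b + e) = c := by
    apply mul_right_cancel₀ h1α.ne'
    rw [hcdef]; linear_combination 2*n*he' + hD
  constructor
  · field_simp
    nlinarith [key1]
  · rw [div_add_div _ _ hc.ne' hn.ne', div_eq_zero_iff]
    left
    nlinarith [key2]
end
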